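/- Let A = [[1,0],[0,0]] and B = [[λ, √(λ(1−λ))], [√(λ(1−λ)), 1−λ]] with λ = 3 − 2√2. Then the operator norm of A − B equals √(2√2 − 2). -/
import Mathlib
set_option synthInstance.maxHeartbeats 1000000 in


/-- With `λ = 3 − 2√2`, the operator norm of `A − B` equals `√(2√2 − 2)`,
where `A = [[1,0],[0,0]]` and `B = [[λ, √(λ(1−λ))],[√(λ(1−λ)), 1−λ]]`. -/
theorem stmt_4 (lam : ℝ) (hlam : lam = 3 - 2 * Real.sqrt 2)
    (A B : Matrix (Fin 2) (Fin 2) ℝ)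
    (hA : A = !![1, 0; 0, 0])
    (hB : B = !![lam, Real.sqrt (lam * (1 - lam)); Real.sqrt (lam * (1 - lam)), 1 - lam]) :
    ‖Matrix.toEuclideanCLM (𝕜 := ℝ) A - Matrix.toEuclideanCLM (𝕜 := ℝ) B‖
      = Real.sqrt (2 * Real.sqrt 2 - 2) := by
  have h2 : Real.sqrt 2 ^ 2 = 2 := Real.sq_sqrt (by norm_num)
  have h2' : (1 : ℝ) < Real.sqrt 2 := by nlinarith [Real.sqrt_nonneg 2]
  set c : ℝ := 2 * Real.sqrt 2 - 2 with hc
  have hcpos : 0 < c := by simp only [hc]; linarith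
  have hlam1 : 1 - lam = c := by rw [hlam, hc]; ring
  have hlampos : 0 < lam := by rw [hlam]; nlinarith
  have hsq : Real.sqrt (lam * (1 - lam)) ^ 2 = lam * (1 - lam) :=
    Real.sq_sqrt (by nlinarith)
  have hMM : star (A - B) * (A - B) = c • (1 : Matrix (Fin 2) (Fin 2) ℝ) := by
    subst hA hB
    ext i j
    fin_cases i <;> fin_cases j <;>
      simp [Matrix.mul_apply, Fin.sum_univ_two, Matrix.one_apply,
        Matrix.conjTranspose, Matrix.smul_apply] <;>
      nlinarith [hsq, hlam1]
  set T := Matrix.toEuclideanCLM (𝕜 := ℝ) A - Matrix.toEuclideanCLM (𝕜 := ℝ) B with hT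
  have hT' : T = Matrix.toEuclideanCLM (𝕜 := ℝ) (A - B) := by rw [map_sub]
  have hstar : star T * T = c • (1 : EuclideanSpace ℝ (Fin 2) →L[ℝ] EuclideanSpace ℝ (Fin 2)) := by
    rw [hT', ← map_star, ← map_mul, hMM, map_smul, map_one]
  have hnorm : ‖T‖ * ‖T‖ = c := by
    rw [← CStarRing.norm_star_mul_self, hstar,
      norm_smul c (1 : EuclideanSpace ℝ (Fin 2) →L[ℝ] EuclideanSpace ℝ (Fin 2)),
      norm_one, mul_one, Real.norm_eq_abs, abs_of_pos hcpos]
  rw [← hnorm, Real.sqrt_mul_self (norm_nonneg T)]
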